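/- Let A_N' be the matrix obtained from A_N by additionally setting the (1,1) and (2^N, 2^N) diagonal entries to 1 (corresponding to adding self-loops at the vertices 0 and 1 of the Preisach transition graph). Then the characteristic polynomial of A_N' equals χ_N'(λ) = (2-λ)·U_N(-λ/2)·Π_{i=0}^{N-1} (U_i(-λ/2))^{2^{N-i-1}} for N ≥ 1. -/

import Mathlib

open Matrix Polynomial

/-- `J_k = diag(1,0,...,0)` of order `2^k`. -/
noncomputable def Jmat (k : ℕ) : Matrix (Fin (2 ^ k)) (Fin (2 ^ k)) ℝ :=
  Matrix.diagonal (fun i => if (i : ℕ) = 0 then 1 else 0)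

/-- `J_k' = diag(0,...,0,1)` of order `2^k`. -/
noncomputable def Jmat' (k : ℕ) : Matrix (Fin (2 ^ k)) (Fin (2 ^ k)) ℝ :=
  Matrix.diagonal (fun i => if (i : ℕ) = 2 ^ k - 1 then 1 else 0)

/-- The equivalence identifying `Fin (2^k) ⊕ Fin (2^k)` with `Fin (2^(k+1))`. -/
def blockEquiv (k : ℕ) : Fin (2 ^ k) ⊕ Fin (2 ^ k) ≃ Fin (2 ^ (k + 1)) :=
  finSumFinEquiv.trans (finCongr (by rw [pow_succ, mul_two]))

/-- The adjacency matrices `A_k`, defined recursively by `A_0 = (0)` and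
`A_{k+1} = [[A_k, J_k], [J_k', A_k]]` in block form. -/
noncomputable def Amat : (k : ℕ) → Matrix (Fin (2 ^ k)) (Fin (2 ^ k)) ℝ
  | 0 => 0
  | (k + 1) => Matrix.reindex (blockEquiv k) (blockEquiv k)
      (Matrix.fromBlocks (Amat k) (Jmat k) (Jmat' k) (Amat k))

/-- `T_k = A_k - λ I`. -/
noncomputable def Tmat (k : ℕ) (l : ℝ) : Matrix (Fin (2 ^ k)) (Fin (2 ^ k)) ℝ :=
  Amat k - l • 1

/-- Characteristic polynomial value `χ_k(λ) = det (A_k - λ I)`. -/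
noncomputable def chiA (k : ℕ) (l : ℝ) : ℝ := (Tmat k l).det

/-- Submatrix obtained by deleting the top row and the rightmost column. -/
noncomputable def delTopRight {n : ℕ} (M : Matrix (Fin n) (Fin n) ℝ) :
    Matrix (Fin (n - 1)) (Fin (n - 1)) ℝ :=
  Matrix.of fun i j => M ⟨i.1 + 1, by have := i.isLt; omega⟩ ⟨j.1, by have := j.isLt; omega⟩

/-- Submatrix obtained by deleting the bottom row and the rightmost column. -/
noncomputable def delBotRight {n : ℕ} (M : Matrix (Fin n) (Fin n) ℝ) :
    Matrix (Fin (n - 1)) (Fin (n - 1)) ℝ :=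
  Matrix.of fun i j => M ⟨i.1, by have := i.isLt; omega⟩ ⟨j.1, by have := j.isLt; omega⟩

/-- `φ_k = det Q_k`, where `Q_k` is `T_k` with top row and right column deleted. -/
noncomputable def phiA (k : ℕ) (l : ℝ) : ℝ := (delTopRight (Tmat k l)).det

/-- `ψ_k = det P_k`, where `P_k` is `T_k` with bottom row and right column deleted. -/
noncomputable def psiA (k : ℕ) (l : ℝ) : ℝ := (delBotRight (Tmat k l)).det

/-- `A_N' = A_N + diag(1,0,...,0,1)` (self-loops at the extreme states). -/
noncomputable def Amat' (N : ℕ) : Matrix (Fin (2 ^ N)) (Fin (2 ^ N)) ℝ :=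
  Amat N + Matrix.diagonal (fun i : Fin (2 ^ N) => if (i : ℕ) = 0 ∨ (i : ℕ) = 2 ^ N - 1 then 1 else 0)

namespace ChiAux

/-! ### Index helpers -/

def z (k : ℕ) : Fin (2 ^ k) := ⟨0, Nat.two_pow_pos k⟩

def lst (k : ℕ) : Fin (2 ^ k) := ⟨2 ^ k - 1, by have := Nat.two_pow_pos k; omega⟩

/-! ### Auxiliary cofactor-like determinants -/

noncomputable def aD (k : ℕ) (l : ℝ) : ℝ :=
  ((Tmat k l).updateRow (z k) (Pi.single (lst k) 1)).det

noncomputable def bD (k : ℕ) (l : ℝ) : ℝ :=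
  ((Tmat k l).updateRow (lst k) (Pi.single (z k) 1)).det

noncomputable def cD (k : ℕ) (l : ℝ) : ℝ :=
  ((Tmat k l).updateRow (z k) (Pi.single (z k) 1)).det

noncomputable def dD (k : ℕ) (l : ℝ) : ℝ :=
  ((Tmat k l).updateRow (lst k) (Pi.single (lst k) 1)).det

noncomputable def tD (k : ℕ) (l : ℝ) : ℝ :=
  (((Tmat k l).updateRow (z k) (Pi.single (z k) 1)).updateRow (lst k) (Pi.single (lst k) 1)).det

/-! ### Generic matrix lemmas -/

lemma updateRow_updateRow {n m : Type*} [DecidableEq n] (M : Matrix n m ℝ) (i : n)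
    (u v : m → ℝ) : (M.updateRow i u).updateRow i v = M.updateRow i v := by
  ext a b
  by_cases h : a = i <;> simp [Matrix.updateRow_apply, h]

lemma sum_elim_split {n m : Type*} (u : n → ℝ) (v : m → ℝ) :
    Sum.elim u v = Sum.elim u (0 : m → ℝ) + Sum.elim (0 : n → ℝ) v := by
  funext x; cases x <;> simp

lemma fromBlocks_row_inl {n m : Type*} (A : Matrix n n ℝ) (B : Matrix n m ℝ)
    (C : Matrix m n ℝ) (D : Matrix m m ℝ) (i : n) :
    (fromBlocks A B C D) (Sum.inl i) = Sum.elim (A i) (B i) := by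
  funext x; cases x <;> rfl

lemma fromBlocks_row_inr {n m : Type*} (A : Matrix n n ℝ) (B : Matrix n m ℝ)
    (C : Matrix m n ℝ) (D : Matrix m m ℝ) (i : m) :
    (fromBlocks A B C D) (Sum.inr i) = Sum.elim (C i) (D i) := by
  funext x; cases x <;> rfl

lemma updateRow_fromBlocks_inl {n m : Type*} [DecidableEq n] [DecidableEq m]
    (A : Matrix n n ℝ) (B : Matrix n m ℝ) (C : Matrix m n ℝ) (D : Matrix m m ℝ)
    (i : n) (u : n → ℝ) (v : m → ℝ) :
    (fromBlocks A B C D).updateRow (Sum.inl i) (Sum.elim u v)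
      = fromBlocks (A.updateRow i u) (B.updateRow i v) C D := by
  ext x y
  rcases x with x | x
  · rcases y with y | y <;> by_cases h : x = i <;>
      simp [Matrix.updateRow_apply, h, Matrix.fromBlocks]
  · rcases y with y | y <;> simp [Matrix.updateRow_apply, Matrix.fromBlocks]

lemma updateRow_fromBlocks_inr {n m : Type*} [DecidableEq n] [DecidableEq m]
    (A : Matrix n n ℝ) (B : Matrix n m ℝ) (C : Matrix m n ℝ) (D : Matrix m m ℝ)
    (i : m) (u : n → ℝ) (v : m → ℝ) :
    (fromBlocks A B C D).updateRow (Sum.inr i) (Sum.elim u v)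
      = fromBlocks A B (C.updateRow i u) (D.updateRow i v) := by
  ext x y
  rcases x with x | x
  · rcases y with y | y <;> simp [Matrix.updateRow_apply, Matrix.fromBlocks]
  · rcases y with y | y <;> by_cases h : x = i <;>
      simp [Matrix.updateRow_apply, h, Matrix.fromBlocks]

lemma pi_single_inl {n m : Type*} [DecidableEq n] [DecidableEq m] (i : n) :
    (Pi.single (Sum.inl i : n ⊕ m) (1 : ℝ)) = Sum.elim (Pi.single i 1) (0 : m → ℝ) := by
  funext x
  rcases x with x | x <;> simp [Pi.single_apply]

lemma pi_single_inr {n m : Type*} [DecidableEq n] [DecidableEq m] (i : m) :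
    (Pi.single (Sum.inr i : n ⊕ m) (1 : ℝ)) = Sum.elim (0 : n → ℝ) (Pi.single i 1) := by
  funext x
  rcases x with x | x <;> simp [Pi.single_apply]

lemma single_comp_equiv {α β : Type*} [DecidableEq α] [DecidableEq β] (e : α ≃ β) (b : β) :
    (fun a => (Pi.single b (1 : ℝ) : β → ℝ) (e a)) = Pi.single (e.symm b) 1 := by
  funext a
  simp only [Pi.single_apply]
  congr 1
  simp [Equiv.eq_symm_apply, eq_comm]

lemma det_swap_eq {n : Type*} [DecidableEq n] [Fintype n] (M : Matrix n n ℝ) {r s : n}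
    (h : r ≠ s) : M.det = -(M.submatrix (Equiv.swap r s) id).det := by
  have h2 := Matrix.det_permute (Equiv.swap r s) M
  rw [Equiv.Perm.sign_swap h] at h2
  push_cast at h2
  linarith

lemma submatrix_swap_fromBlocks {n : Type*} [DecidableEq n]
    (P B C Q : Matrix n n ℝ) (a b : n) :
    (fromBlocks P B C Q).submatrix (Equiv.swap (Sum.inl a) (Sum.inr b)) id
      = fromBlocks (P.updateRow a (C b)) (B.updateRow a (Q b))
          (C.updateRow b (P a)) (Q.updateRow b (B a)) := by
  ext x y
  rcases x with x | x <;> rcases y with y | y <;>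
    · simp only [Matrix.submatrix_apply, id_eq, Equiv.swap_apply_def, Matrix.updateRow_apply]
      split_ifs <;> simp_all [Matrix.fromBlocks]

/-! ### Rows of `J` matrices -/

lemma Jmat_row (k : ℕ) : Jmat k (z k) = Pi.single (z k) 1 := by
  funext j
  by_cases h : j = z k
  · subst h; simp [Jmat, z]
  · simp [Jmat, Matrix.diagonal_apply, Pi.single_apply, h, Ne.symm h]

lemma Jmat_row_ne (k : ℕ) {i : Fin (2 ^ k)} (h : i ≠ z k) : Jmat k i = 0 := by
  funext j
  have : (i : ℕ) ≠ 0 := by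
    intro hc; exact h (Fin.ext hc)
  simp [Jmat, Matrix.diagonal_apply, this]
  intro _ hc; apply this; simp [hc]

lemma Jmat'_row (k : ℕ) : Jmat' k (lst k) = Pi.single (lst k) 1 := by
  funext j
  simp [Jmat', Matrix.diagonal_apply, Pi.single_apply, lst, eq_comm, Fin.ext_iff]

lemma Jmat'_row_ne (k : ℕ) {i : Fin (2 ^ k)} (h : i ≠ lst k) : Jmat' k i = 0 := by
  funext j
  have : (i : ℕ) ≠ 2 ^ k - 1 := by
    intro hc; exact h (Fin.ext hc)
  simp [Jmat', Matrix.diagonal_apply, this]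

lemma Jmat_updz (k : ℕ) : (Jmat k).updateRow (z k) 0 = 0 := by
  ext i j
  by_cases h : i = z k
  · simp [h]
  · simp [Matrix.updateRow_apply, h, Jmat_row_ne k h]

lemma Jmat'_updl (k : ℕ) : (Jmat' k).updateRow (lst k) 0 = 0 := by
  ext i j
  by_cases h : i = lst k
  · simp [h]
  · simp [Matrix.updateRow_apply, h, Jmat'_row_ne k h]

lemma Jmat_upd_self (k : ℕ) : (Jmat k).updateRow (z k) (Pi.single (z k) 1) = Jmat k := by
  rw [← Jmat_row, Matrix.updateRow_eq_self]

lemma Jmat'_upd_self (k : ℕ) : (Jmat' k).updateRow (lst k) (Pi.single (lst k) 1) = Jmat' k := by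
  rw [← Jmat'_row, Matrix.updateRow_eq_self]

/-! ### Block equivalence facts -/

lemma blockEquiv_symm_z (k : ℕ) : (blockEquiv k).symm (z (k + 1)) = Sum.inl (z k) := by
  rw [Equiv.symm_apply_eq]
  apply Fin.ext
  simp [blockEquiv, z]

lemma blockEquiv_symm_lst (k : ℕ) : (blockEquiv k).symm (lst (k + 1)) = Sum.inr (lst k) := by
  rw [Equiv.symm_apply_eq]
  apply Fin.ext
  have h := Nat.two_pow_pos k
  simp [blockEquiv, lst, Fin.ext_iff]
  omega

/-! ### The block structure of `T` -/

lemma Tmat_succ (k : ℕ) (l : ℝ) :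
    Tmat (k + 1) l = (fromBlocks (Tmat k l) (Jmat k) (Jmat' k) (Tmat k l)).submatrix
      ⇑(blockEquiv k).symm ⇑(blockEquiv k).symm := by
  have h1 : Amat (k + 1) = (fromBlocks (Amat k) (Jmat k) (Jmat' k) (Amat k)).submatrix
      ⇑(blockEquiv k).symm ⇑(blockEquiv k).symm := rfl
  have h2 : (1 : Matrix (Fin (2 ^ (k + 1))) (Fin (2 ^ (k + 1))) ℝ)
      = (fromBlocks (1 : Matrix (Fin (2 ^ k)) (Fin (2 ^ k)) ℝ) 0 0 1).submatrix
          ⇑(blockEquiv k).symm ⇑(blockEquiv k).symm := by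
    rw [fromBlocks_one, Matrix.submatrix_one_equiv]
  rw [Tmat, h1, h2]
  ext i j
  rcases hi : (blockEquiv k).symm i with x | x <;> rcases hj : (blockEquiv k).symm j with y | y <;>
    simp [Matrix.submatrix_apply, hi, hj, Matrix.fromBlocks, Tmat]

lemma det_transfer (k : ℕ) (l : ℝ) :
    chiA (k + 1) l = (fromBlocks (Tmat k l) (Jmat k) (Jmat' k) (Tmat k l)).det := by
  rw [chiA, Tmat_succ, Matrix.det_submatrix_equiv_self]

lemma updateRow_transfer (k : ℕ) (l : ℝ) (i : Fin (2 ^ (k + 1))) (v : Fin (2 ^ (k + 1)) → ℝ) :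
    ((Tmat (k + 1) l).updateRow i v).det
      = ((fromBlocks (Tmat k l) (Jmat k) (Jmat' k) (Tmat k l)).updateRow
          ((blockEquiv k).symm i) (fun j => v (blockEquiv k j))).det := by
  rw [Tmat_succ, Matrix.updateRow_submatrix_equiv, Matrix.det_submatrix_equiv_self]
  rfl

/-! ### Transfer of double update -/

lemma updateRow2_transfer (k : ℕ) (l : ℝ) (i i' : Fin (2 ^ (k + 1)))
    (v v' : Fin (2 ^ (k + 1)) → ℝ) :
    (((Tmat (k + 1) l).updateRow i v).updateRow i' v').det
      = (((fromBlocks (Tmat k l) (Jmat k) (Jmat' k) (Tmat k l)).updateRow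
          ((blockEquiv k).symm i) (fun j => v (blockEquiv k j))).updateRow
          ((blockEquiv k).symm i') (fun j => v' (blockEquiv k j))).det := by
  rw [Tmat_succ, Matrix.updateRow_submatrix_equiv, Matrix.updateRow_submatrix_equiv,
    Matrix.det_submatrix_equiv_self]
  rfl

/-! ### The recursions -/

lemma chi_succ (k : ℕ) (l : ℝ) :
    chiA (k + 1) l = chiA k l ^ 2 - aD k l * bD k l := by
  rw [det_transfer k l]
  set T := Tmat k l with hT
  set J := Jmat k with hJ
  set J' := Jmat' k with hJ'
  set mi := lst k with hmi
  set zi := z k with hzi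
  set B := fromBlocks T J J' T with hB
  have hrow : B (Sum.inr mi) = Sum.elim (Pi.single mi 1) (0 : Fin (2 ^ k) → ℝ)
      + Sum.elim (0 : Fin (2 ^ k) → ℝ) (T mi) := by
    rw [hB, fromBlocks_row_inr, ← sum_elim_split, hJ', hmi, Jmat'_row]
  have hsplit : B.det = (B.updateRow (Sum.inr mi) (Sum.elim (Pi.single mi 1) (0 : Fin (2 ^ k) → ℝ))).det
      + (B.updateRow (Sum.inr mi) (Sum.elim (0 : Fin (2 ^ k) → ℝ) (T mi))).det := by
    conv_lhs => rw [← Matrix.updateRow_eq_self B (Sum.inr mi), hrow]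
    rw [Matrix.det_updateRow_add]
  have h2 : (B.updateRow (Sum.inr mi) (Sum.elim (0 : Fin (2 ^ k) → ℝ) (T mi))).det
      = T.det * T.det := by
    rw [hB, updateRow_fromBlocks_inr, hJ', hmi, Jmat'_updl, Matrix.updateRow_eq_self,
      Matrix.det_fromBlocks_zero₂₁]
  have e1 : B.updateRow (Sum.inr mi) (Sum.elim (Pi.single mi 1) (0 : Fin (2 ^ k) → ℝ))
      = fromBlocks T J J' (T.updateRow mi 0) := by
    rw [hB, updateRow_fromBlocks_inr, hJ', hmi, Jmat'_upd_self]
  set B1 := fromBlocks T J J' (T.updateRow mi 0) with hB1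
  have hrow0 : B1 (Sum.inl zi) = Sum.elim (T zi) (0 : Fin (2 ^ k) → ℝ)
      + Sum.elim (0 : Fin (2 ^ k) → ℝ) (Pi.single zi 1) := by
    rw [hB1, fromBlocks_row_inl, ← sum_elim_split, hJ, hzi, Jmat_row]
  have hsplit1 : B1.det = (B1.updateRow (Sum.inl zi) (Sum.elim (T zi) (0 : Fin (2 ^ k) → ℝ))).det
      + (B1.updateRow (Sum.inl zi) (Sum.elim (0 : Fin (2 ^ k) → ℝ) (Pi.single zi 1))).det := by
    conv_lhs => rw [← Matrix.updateRow_eq_self B1 (Sum.inl zi), hrow0]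
    rw [Matrix.det_updateRow_add]
  have h11 : (B1.updateRow (Sum.inl zi) (Sum.elim (T zi) (0 : Fin (2 ^ k) → ℝ))).det = 0 := by
    rw [hB1, updateRow_fromBlocks_inl, Matrix.updateRow_eq_self, hJ, hzi, Jmat_updz,
      Matrix.det_fromBlocks_zero₁₂]
    have hz : (T.updateRow mi 0).det = 0 :=
      Matrix.det_eq_zero_of_row_eq_zero mi (fun j => by simp)
    rw [hz, mul_zero]
  have h12 : (B1.updateRow (Sum.inl zi) (Sum.elim (0 : Fin (2 ^ k) → ℝ) (Pi.single zi 1))).det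
      = -(aD k l * bD k l) := by
    rw [hB1, updateRow_fromBlocks_inl, hJ, hzi, Jmat_upd_self]
    rw [det_swap_eq (r := Sum.inl (z k)) (s := Sum.inr mi) _ (by simp)]
    rw [submatrix_swap_fromBlocks, updateRow_updateRow, updateRow_updateRow,
      Matrix.updateRow_self, Matrix.updateRow_self, hmi, hJ', Jmat'_row, Jmat_row,
      Jmat_updz, Jmat'_updl, Matrix.det_fromBlocks_zero₂₁]
    rw [aD, bD, ← hT]
  rw [hsplit, e1, hsplit1, h11, h2, h12, chiA, ← hT]
  ring

lemma cD_succ (k : ℕ) (l : ℝ) : cD (k + 1) l = cD k l * chiA k l := by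
  rw [cD, updateRow_transfer, single_comp_equiv, blockEquiv_symm_z, pi_single_inl,
    updateRow_fromBlocks_inl, Jmat_updz, Matrix.det_fromBlocks_zero₁₂, cD, chiA]

lemma dD_succ (k : ℕ) (l : ℝ) : dD (k + 1) l = chiA k l * dD k l := by
  rw [dD, updateRow_transfer, single_comp_equiv, blockEquiv_symm_lst, pi_single_inr,
    updateRow_fromBlocks_inr, Jmat'_updl, Matrix.det_fromBlocks_zero₂₁, dD, chiA]

lemma tD_succ (k : ℕ) (l : ℝ) : tD (k + 1) l = cD k l * dD k l := by
  rw [tD, updateRow2_transfer, single_comp_equiv, single_comp_equiv,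
    blockEquiv_symm_z, blockEquiv_symm_lst, pi_single_inl, pi_single_inr,
    updateRow_fromBlocks_inl, updateRow_fromBlocks_inr, Jmat_updz, Jmat'_updl,
    Matrix.det_fromBlocks_zero₂₁, cD, dD]

lemma aD_succ (k : ℕ) (l : ℝ) : aD (k + 1) l = -(aD k l * dD k l) := by
  rw [aD, updateRow_transfer, single_comp_equiv, blockEquiv_symm_z, blockEquiv_symm_lst,
    pi_single_inr, updateRow_fromBlocks_inl]
  set T := Tmat k l with hT
  set B1 := fromBlocks (T.updateRow (z k) 0) ((Jmat k).updateRow (z k) (Pi.single (lst k) 1))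
      (Jmat' k) T with hB1
  have hrow : B1 (Sum.inr (lst k)) = Sum.elim (Pi.single (lst k) 1) (0 : Fin (2 ^ k) → ℝ)
      + Sum.elim (0 : Fin (2 ^ k) → ℝ) (T (lst k)) := by
    rw [hB1, fromBlocks_row_inr, ← sum_elim_split, Jmat'_row]
  have hsplit : B1.det = (B1.updateRow (Sum.inr (lst k)) (Sum.elim (Pi.single (lst k) 1) (0 : Fin (2 ^ k) → ℝ))).det
      + (B1.updateRow (Sum.inr (lst k)) (Sum.elim (0 : Fin (2 ^ k) → ℝ) (T (lst k)))).det := by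
    conv_lhs => rw [← Matrix.updateRow_eq_self B1 (Sum.inr (lst k)), hrow]
    rw [Matrix.det_updateRow_add]
  have h2 : (B1.updateRow (Sum.inr (lst k)) (Sum.elim (0 : Fin (2 ^ k) → ℝ) (T (lst k)))).det = 0 := by
    rw [hB1, updateRow_fromBlocks_inr, Jmat'_updl, Matrix.updateRow_eq_self,
      Matrix.det_fromBlocks_zero₂₁]
    have hz : ((T.updateRow (z k) 0)).det = 0 :=
      Matrix.det_eq_zero_of_row_eq_zero (z k) (fun j => by simp)
    rw [hz, zero_mul]
  have h1 : (B1.updateRow (Sum.inr (lst k)) (Sum.elim (Pi.single (lst k) 1) (0 : Fin (2 ^ k) → ℝ))).det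
      = -(aD k l * dD k l) := by
    rw [hB1, updateRow_fromBlocks_inr, Jmat'_upd_self]
    rw [det_swap_eq (r := Sum.inl (z k)) (s := Sum.inr (lst k)) _ (by simp)]
    rw [submatrix_swap_fromBlocks, updateRow_updateRow, updateRow_updateRow,
      Matrix.updateRow_self, Matrix.updateRow_self, Jmat'_row,
      updateRow_updateRow, Jmat_updz, Jmat'_updl, Matrix.det_fromBlocks_zero₂₁,
      Matrix.updateRow_self]
    rw [aD, dD, ← hT]
  rw [hsplit, h1, h2, add_zero]

lemma bD_succ (k : ℕ) (l : ℝ) : bD (k + 1) l = -(cD k l * bD k l) := by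
  rw [bD, updateRow_transfer, single_comp_equiv, blockEquiv_symm_z, blockEquiv_symm_lst,
    pi_single_inl, updateRow_fromBlocks_inr]
  set T := Tmat k l with hT
  set B1 := fromBlocks T (Jmat k) ((Jmat' k).updateRow (lst k) (Pi.single (z k) 1))
      (T.updateRow (lst k) 0) with hB1
  have hrow : B1 (Sum.inl (z k)) = Sum.elim (T (z k)) (0 : Fin (2 ^ k) → ℝ)
      + Sum.elim (0 : Fin (2 ^ k) → ℝ) (Pi.single (z k) 1) := by
    rw [hB1, fromBlocks_row_inl, ← sum_elim_split, Jmat_row]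
  have hsplit : B1.det = (B1.updateRow (Sum.inl (z k)) (Sum.elim (T (z k)) (0 : Fin (2 ^ k) → ℝ))).det
      + (B1.updateRow (Sum.inl (z k)) (Sum.elim (0 : Fin (2 ^ k) → ℝ) (Pi.single (z k) 1))).det := by
    conv_lhs => rw [← Matrix.updateRow_eq_self B1 (Sum.inl (z k)), hrow]
    rw [Matrix.det_updateRow_add]
  have h2 : (B1.updateRow (Sum.inl (z k)) (Sum.elim (T (z k)) (0 : Fin (2 ^ k) → ℝ))).det = 0 := by
    rw [hB1, updateRow_fromBlocks_inl, Matrix.updateRow_eq_self, Jmat_updz,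
      Matrix.det_fromBlocks_zero₁₂]
    have hz : ((T.updateRow (lst k) 0)).det = 0 :=
      Matrix.det_eq_zero_of_row_eq_zero (lst k) (fun j => by simp)
    rw [hz, mul_zero]
  have h1 : (B1.updateRow (Sum.inl (z k)) (Sum.elim (0 : Fin (2 ^ k) → ℝ) (Pi.single (z k) 1))).det
      = -(cD k l * bD k l) := by
    rw [hB1, updateRow_fromBlocks_inl, Jmat_upd_self]
    rw [det_swap_eq (r := Sum.inl (z k)) (s := Sum.inr (lst k)) _ (by simp)]
    rw [submatrix_swap_fromBlocks]
    simp only [updateRow_updateRow, Matrix.updateRow_self]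
    rw [Jmat_row, Jmat_updz, Jmat'_updl, Matrix.det_fromBlocks_zero₂₁, cD, bD, ← hT]
  rw [hsplit, h1, h2, zero_add]

/-! ### Chebyshev facts -/

lemma U_sq_poly (n : ℕ) :
    (Polynomial.Chebyshev.U ℝ ((n : ℤ) + 1)) ^ 2
      = Polynomial.Chebyshev.U ℝ ((n : ℤ) + 2) * Polynomial.Chebyshev.U ℝ (n : ℤ) + 1 := by
  induction n with
  | zero =>
    norm_num [Polynomial.Chebyshev.U_two, Polynomial.Chebyshev.U_zero]
    ring
  | succ n ih =>
    have h1 := Polynomial.Chebyshev.U_add_two ℝ ((n : ℤ) + 1)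
    have h2 := Polynomial.Chebyshev.U_add_two ℝ (n : ℤ)
    push_cast
    have e1 : ((n : ℤ) + 1) + 1 = (n : ℤ) + 2 := by ring
    have e2 : ((n : ℤ) + 1) + 2 = (n : ℤ) + 3 := by ring
    rw [e1, e2] at h1
    rw [e1, e2]
    linear_combination (-(Polynomial.Chebyshev.U ℝ ((n : ℤ) + 1))) * h1 + ih
      + (Polynomial.Chebyshev.U ℝ ((n : ℤ) + 2)) * h2

noncomputable def uch (l : ℝ) (i : ℕ) : ℝ := (Polynomial.Chebyshev.U ℝ (i : ℤ)).eval (-l / 2)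

noncomputable def Pch (l : ℝ) (k : ℕ) : ℝ :=
  ∏ i ∈ Finset.range k, uch l i ^ 2 ^ (k - i - 1)

lemma uch_zero (l : ℝ) : uch l 0 = 1 := by
  simp [uch, Polynomial.Chebyshev.U_zero]

lemma uch_one (l : ℝ) : uch l 1 = -l := by
  simp only [uch, Nat.cast_one, Polynomial.Chebyshev.U_one, Polynomial.eval_mul,
    Polynomial.eval_ofNat, Polynomial.eval_X]
  ring

lemma uch_sq (l : ℝ) (k : ℕ) :
    uch l (k + 1) ^ 2 = uch l (k + 2) * uch l k + 1 := by
  have h := congrArg (Polynomial.eval (-l / 2)) (U_sq_poly k)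
  simp only [Polynomial.eval_pow, Polynomial.eval_mul, Polynomial.eval_add,
    Polynomial.eval_one] at h
  rw [uch, uch, uch]
  push_cast
  exact h

lemma uch_rec (l : ℝ) (N : ℕ) (hN : 1 ≤ N) :
    uch l (N + 1) = -l * uch l N - uch l (N - 1) := by
  have h := Polynomial.Chebyshev.U_add_two ℝ ((N : ℤ) - 1)
  have e1 : ((N : ℤ) - 1) + 2 = (N : ℤ) + 1 := by ring
  have e2 : ((N : ℤ) - 1) + 1 = (N : ℤ) := by ring
  rw [e1, e2] at h
  have h2 := congrArg (Polynomial.eval (-l / 2)) h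
  simp only [Polynomial.eval_sub, Polynomial.eval_mul, Polynomial.eval_ofNat,
    Polynomial.eval_X] at h2
  rw [uch, uch, uch]
  have e3 : ((N - 1 : ℕ) : ℤ) = (N : ℤ) - 1 := by omega
  rw [e3]
  push_cast
  rw [h2]
  ring

lemma Pch_zero (l : ℝ) : Pch l 0 = 1 := by simp [Pch]

lemma Pch_succ (l : ℝ) (k : ℕ) : Pch l (k + 1) = uch l k * (Pch l k) ^ 2 := by
  rw [Pch, Finset.prod_range_succ]
  have he : k + 1 - k - 1 = 0 := by omega
  rw [he, pow_zero, pow_one]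
  have hc : ∀ i ∈ Finset.range k, uch l i ^ 2 ^ (k + 1 - i - 1)
      = (uch l i ^ 2 ^ (k - i - 1)) ^ 2 := by
    intro i hi
    have hik : i < k := Finset.mem_range.mp hi
    rw [show k + 1 - i - 1 = (k - i - 1) + 1 from by omega, pow_succ, pow_mul]
  rw [Finset.prod_congr rfl hc, Finset.prod_pow]
  rw [Pch]
  ring

/-! ### Base case -/

instance : Unique (Fin (2 ^ 0)) :=
  ⟨⟨z 0⟩, fun a => Fin.ext (by have h := a.isLt; have h2 : (2 : ℕ) ^ 0 = 1 := pow_zero 2; show (a : ℕ) = 0; omega)⟩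

lemma lst_zero : lst 0 = z 0 := Subsingleton.elim _ _

lemma chiA_zero (l : ℝ) : chiA 0 l = -l := by
  rw [chiA, Matrix.det_unique]
  show (Amat 0 - l • 1) default default = -l
  simp [Amat, Matrix.one_apply]

lemma base_one (l : ℝ) (i j : Fin (2 ^ 0)) :
    ((Tmat 0 l).updateRow i (Pi.single j 1)).det = 1 := by
  rw [Matrix.det_unique]
  obtain rfl : i = j := Subsingleton.elim i j
  have hd : (default : Fin (2 ^ 0)) = i := Subsingleton.elim _ _
  simp [Matrix.updateRow_apply, hd]
  rw [if_pos (Subsingleton.elim _ _), Pi.single_apply, if_pos (Subsingleton.elim _ _)]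

/-! ### Closed forms -/

lemma closed_form (k : ℕ) (l : ℝ) :
    chiA k l = uch l (k + 1) * Pch l k ∧ cD k l = uch l k * Pch l k
      ∧ dD k l = uch l k * Pch l k ∧ aD k l * bD k l = (Pch l k) ^ 2 := by
  induction k with
  | zero =>
    refine ⟨?_, ?_, ?_, ?_⟩
    · rw [chiA_zero, Pch_zero, show (0 + 1 : ℕ) = 1 from rfl, uch_one]; ring
    · rw [cD, base_one, Pch_zero, uch_zero]; ring
    · rw [dD, base_one, Pch_zero, uch_zero]; ring
    · rw [aD, bD, base_one, base_one, Pch_zero]; ring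
  | succ k ih =>
    obtain ⟨h1, h2, h3, h4⟩ := ih
    refine ⟨?_, ?_, ?_, ?_⟩
    · rw [chi_succ, h1, h4, Pch_succ]
      have hsq := uch_sq l k
      linear_combination (Pch l k) ^ 2 * hsq
    · rw [cD_succ, h2, h1, Pch_succ]; ring
    · rw [dD_succ, h3, h1, Pch_succ]; ring
    · rw [aD_succ, bD_succ, Pch_succ]
      have : aD k l * dD k l * (cD k l * bD k l) = (aD k l * bD k l) * (cD k l * dD k l) := by
        ring
      calc -(aD k l * dD k l) * -(cD k l * bD k l)
          = (aD k l * bD k l) * (cD k l * dD k l) := by ring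
        _ = (Pch l k) ^ 2 * ((uch l k * Pch l k) * (uch l k * Pch l k)) := by rw [h4, h2, h3]
        _ = (uch l k * Pch l k ^ 2) ^ 2 := by ring

/-! ### Expansion of the perturbed determinant -/

lemma expand_final (N : ℕ) (hN : 1 ≤ N) (l : ℝ) :
    (Amat' N - l • 1).det = chiA N l + cD N l + dD N l + tD N l := by
  have h2N : 1 < 2 ^ N := by
    calc 1 < 2 ^ 1 := by norm_num
    _ ≤ 2 ^ N := Nat.pow_le_pow_right (by norm_num) hN
  have hne : z N ≠ lst N := by
    intro h
    have := congrArg Fin.val h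
    simp [z, lst] at this
    omega
  set T := Tmat N l with hT
  set S := Amat' N - l • (1 : Matrix (Fin (2 ^ N)) (Fin (2 ^ N)) ℝ) with hS
  have hrow_other : ∀ i : Fin (2 ^ N), i ≠ z N → i ≠ lst N → S i = T i := by
    intro i hi1 hi2
    funext j
    have hv0 : (i : ℕ) ≠ 0 := fun hc => hi1 (Fin.ext hc)
    have hv1 : (i : ℕ) ≠ 2 ^ N - 1 := fun hc => hi2 (Fin.ext hc)
    simp [hS, hT, Amat', Tmat, Matrix.diagonal_apply, hv0, hv1]
    intro _ hc; apply hv0; simp [hc]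
  have hrow_z : S (z N) = T (z N) + Pi.single (z N) 1 := by
    funext j
    simp only [hS, hT, Pi.add_apply, Amat']
    by_cases hj : j = z N
    · subst hj
      simp [Matrix.diagonal_apply, Pi.single_apply, Tmat, Matrix.one_apply, z]
      ring
    · simp [Matrix.diagonal_apply, Pi.single_apply, Tmat, Matrix.one_apply, hj, Ne.symm hj]
  have hrow_lst : S (lst N) = T (lst N) + Pi.single (lst N) 1 := by
    funext j
    simp only [hS, hT, Pi.add_apply, Amat']
    by_cases hj : j = lst N
    · subst hj
      simp [Matrix.diagonal_apply, Pi.single_apply, Tmat, Matrix.one_apply, lst]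
      ring
    · simp [Matrix.diagonal_apply, Pi.single_apply, Tmat, Matrix.one_apply, hj, Ne.symm hj]
  have key : S.det = (S.updateRow (lst N) (T (lst N))).det
      + (S.updateRow (lst N) (Pi.single (lst N) 1)).det := by
    conv_lhs => rw [← Matrix.updateRow_eq_self S (lst N), hrow_lst]
    rw [Matrix.det_updateRow_add]
  have key1 : ∀ X : Fin (2 ^ N) → ℝ, (S.updateRow (lst N) X).det
      = ((S.updateRow (lst N) X).updateRow (z N) (T (z N))).det
        + ((S.updateRow (lst N) X).updateRow (z N) (Pi.single (z N) 1)).det := by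
    intro X
    conv_lhs => rw [← Matrix.updateRow_eq_self (S.updateRow (lst N) X) (z N),
      Matrix.updateRow_ne hne, hrow_z]
    rw [Matrix.det_updateRow_add]
  have meq : ∀ (u v : Fin (2 ^ N) → ℝ),
      (S.updateRow (lst N) v).updateRow (z N) u
        = (T.updateRow (z N) u).updateRow (lst N) v := by
    intro u v
    ext i j
    by_cases hi1 : i = z N
    · subst hi1
      rw [Matrix.updateRow_self, Matrix.updateRow_ne hne, Matrix.updateRow_self]
    · by_cases hi2 : i = lst N
      · subst hi2
        rw [Matrix.updateRow_ne (Ne.symm hne), Matrix.updateRow_self, Matrix.updateRow_self]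
      · rw [Matrix.updateRow_ne hi1, Matrix.updateRow_ne hi2, Matrix.updateRow_ne hi2,
          Matrix.updateRow_ne hi1]
        exact congrFun (hrow_other i hi1 hi2) j
  have m1 : (T.updateRow (z N) (T (z N))).updateRow (lst N) (T (lst N)) = T := by
    rw [Matrix.updateRow_eq_self, Matrix.updateRow_eq_self]
  have m2 : (T.updateRow (z N) (Pi.single (z N) 1)).updateRow (lst N) (T (lst N))
      = T.updateRow (z N) (Pi.single (z N) 1) := by
    rw [show T (lst N) = (T.updateRow (z N) (Pi.single (z N) 1)) (lst N)
      from (Matrix.updateRow_ne (Ne.symm hne)).symm, Matrix.updateRow_eq_self]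
  have m3 : (T.updateRow (z N) (T (z N))).updateRow (lst N) (Pi.single (lst N) 1)
      = T.updateRow (lst N) (Pi.single (lst N) 1) := by
    rw [Matrix.updateRow_eq_self]
  rw [key, key1 (T (lst N)), key1 (Pi.single (lst N) 1), meq, meq, meq, meq, m1, m2, m3]
  rw [chiA, cD, dD, tD, ← hT]
  ring

end ChiAux

/-- The characteristic polynomial of `A_N'` equals
`χ_N'(λ) = (2-λ) * U_N(-λ/2) * ∏_{i=0}^{N-1} (U_i(-λ/2))^(2^(N-i-1))` for all `N ≥ 1`. -/
theorem chiA'_eq_chebyshev (N : ℕ) (hN : 1 ≤ N) (l : ℝ) :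
    (Amat' N - l • 1).det = (2 - l) * (Polynomial.Chebyshev.U ℝ N).eval (-l / 2) *
      ∏ i ∈ Finset.range N, ((Polynomial.Chebyshev.U ℝ i).eval (-l / 2)) ^ (2 ^ (N - i - 1)) := by
  obtain ⟨h1, h2, h3, h4⟩ := ChiAux.closed_form N l
  obtain ⟨g1, g2, g3, g4⟩ := ChiAux.closed_form (N - 1) l
  have hN1 : N - 1 + 1 = N := by omega
  have htD : ChiAux.tD N l = ChiAux.cD (N - 1) l * ChiAux.dD (N - 1) l := by
    conv_lhs => rw [← hN1]
    exact ChiAux.tD_succ (N - 1) l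
  have hP : ChiAux.Pch l N = ChiAux.uch l (N - 1) * (ChiAux.Pch l (N - 1)) ^ 2 := by
    conv_lhs => rw [← hN1]
    exact ChiAux.Pch_succ l (N - 1)
  have hrec := ChiAux.uch_rec l N hN
  have hgoal : (Amat' N - l • 1).det = (2 - l) * ChiAux.uch l N * ChiAux.Pch l N := by
    rw [ChiAux.expand_final N hN l, h1, h2, h3, htD, g2, g3]
    linear_combination (ChiAux.Pch l N) * hrec - (ChiAux.uch l (N - 1)) * hP
  rw [hgoal]
  rfl
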